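/- Let (F, E, L) be a σ-admissible triple, M an L-trivial φ-module over E with E-basis m ∈ Mat_{r×1}(M), Φ ∈ GL_r(E) with φm = Φm, and Ψ ∈ GL_r(L) a fundamental matrix (σ(Ψ) = ΦΨ). Then the entries of the column vector Ψ^{-1}(1 ⊗ m) ∈ Mat_{r×1}(L ⊗_E M) lie in V(M) and form an F-basis of V(M). -/

import Mathlib

open scoped TensorProduct


private lemma basis_aux {R W : Type*} [Field R] [AddCommGroup W] [Module R W]
    (VM : Submodule R W) {n : ℕ} (v : Fin n → W) (hmem : ∀ i, v i ∈ VM)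
    (hind : LinearIndependent R fun i => (⟨v i, hmem i⟩ : VM))
    (hspan : ⊤ ≤ Submodule.span R (Set.range fun i => (⟨v i, hmem i⟩ : VM))) :
    ∃ cb : Module.Basis (Fin n) R VM, ∀ i, (cb i : W) = v i :=
  ⟨Module.Basis.mk hind hspan, fun i => by rw [Module.Basis.mk_apply]⟩

set_option maxHeartbeats 1000000 in
theorem stmt5
    -- the σ-admissible triple (F, E, (∀ l, Ll l))
    (d : ℕ) [NeZero d] (Ll : ZMod d → Type) [∀ l, Field (Ll l)]
    (E : Type) [Field E] [∀ l, Algebra E (Ll l)]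
    (σL : (∀ l, Ll l) →+* (∀ l, Ll l)) (hσLinj : Function.Injective σL)
    (σE : E →+* E)
    (hσcomp : ∀ e : E, σL (algebraMap E (∀ l, Ll l) e) = algebraMap E (∀ l, Ll l) (σE e))
    (hshift : ∀ (x : ∀ l, Ll l) (l : ZMod d), (∀ k, k ≠ l → x k = 0) →
        ∀ m, m ≠ l + 1 → σL x m = 0)
    (F : Type) [Field F] [Algebra F E]
    [Algebra F (∀ l, Ll l)] [IsScalarTower F E (∀ l, Ll l)]
    [SMulCommClass E F (∀ l, Ll l)]
    (hEfix : ∀ e : E, σE e = e ↔ ∃ f : F, algebraMap F E f = e)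
    (hLfix : ∀ x : ∀ l, Ll l, σL x = x ↔
        ∃ f : F, algebraMap E (∀ l, Ll l) (algebraMap F E f) = x)
    [∀ l, Algebra.IsSeparable E (Ll l)]
    -- an (∀ l, Ll l)-trivial φ-module M over E with basis, Φ and fundamental matrix Ψ
    (M : Type) [AddCommGroup M] [Module E M]
    (φ : M →+ M) (hφ : ∀ (e : E) (x : M), φ (e • x) = σE e • φ x)
    (r : ℕ) (b : Module.Basis (Fin r) E M)
    (Φ : Matrix (Fin r) (Fin r) E)
    (hΦ : ∀ i, φ (b i) = ∑ j, Φ i j • b j)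
    (φT : (∀ l, Ll l) ⊗[E] M →+ (∀ l, Ll l) ⊗[E] M)
    (hφT : ∀ (x : ∀ l, Ll l) (y : M), φT (x ⊗ₜ[E] y) = σL x ⊗ₜ[E] φ y)
    (VM : Submodule F ((∀ l, Ll l) ⊗[E] M))
    (hVM : ∀ v, v ∈ VM ↔ φT v = v)
    (ιM : ((∀ l, Ll l) ⊗[F] VM) →ₗ[F] ((∀ l, Ll l) ⊗[E] M))
    (hιM : ∀ (x : ∀ l, Ll l) (v : VM), ιM (x ⊗ₜ[F] v) = x • (v : (∀ l, Ll l) ⊗[E] M))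
    -- M is (∀ l, Ll l)-trivial
    (htriv : Function.Bijective ιM)
    (Ψ Ψinv : Matrix (Fin r) (Fin r) (∀ l, Ll l))
    (hinv₁ : Ψ * Ψinv = 1) (hinv₂ : Ψinv * Ψ = 1)
    (hΨ : Ψ.map σL = Φ.map (algebraMap E (∀ l, Ll l)) * Ψ) :
    -- the entries of Ψ⁻¹(1 ⊗ m) lie in V(M) and form an F-basis of V(M)
    (∀ i, φT (∑ j, Ψinv i j ⊗ₜ[E] b j) = ∑ j, Ψinv i j ⊗ₜ[E] b j) ∧
      ∃ c : Module.Basis (Fin r) F VM,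
        ∀ i, (c i : (∀ l, Ll l) ⊗[E] M) = ∑ j, Ψinv i j ⊗ₜ[E] b j := by
  classical
  haveI : Nontrivial (∀ l, Ll l) := ⟨0, 1, fun h => zero_ne_one (congrFun h (0 : ZMod d))⟩
  -- contraction helper
  have hcontract : ∀ (P Q : Matrix (Fin r) (Fin r) (∀ l, Ll l)), P * Q = 1 →
      ∀ (x : Fin r → (∀ l, Ll l)) (k : Fin r), (∑ j, (∑ i, x i * P i j) * Q j k) = x k := by
    intro P Q hPQ x k
    have h1 : ∀ i, ∑ j, P i j * Q j k = (1 : Matrix (Fin r) (Fin r) (∀ l, Ll l)) i k := by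
      intro i; rw [← hPQ, Matrix.mul_apply]
    calc ∑ j, (∑ i, x i * P i j) * Q j k
        = ∑ i, x i * ∑ j, P i j * Q j k := by
          simp_rw [Finset.sum_mul, Finset.mul_sum, mul_assoc]
          exact Finset.sum_comm
      _ = x k := by
          simp [h1, Matrix.one_apply]
  -- key matrix identity
  have hkey : Ψinv.map σL * Φ.map (algebraMap E (∀ l, Ll l)) = Ψinv := by
    have h1 : Ψinv.map σL * Ψ.map σL = 1 := by
      rw [← Matrix.map_mul, hinv₂, Matrix.map_one σL σL.map_zero σL.map_one]
    calc Ψinv.map σL * Φ.map (algebraMap E (∀ l, Ll l))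
        = Ψinv.map σL * Φ.map (algebraMap E (∀ l, Ll l)) * (Ψ * Ψinv) := by rw [hinv₁, mul_one]
      _ = Ψinv.map σL * (Φ.map (algebraMap E (∀ l, Ll l)) * Ψ) * Ψinv := by rw [mul_assoc, mul_assoc, mul_assoc]
      _ = Ψinv.map σL * Ψ.map σL * Ψinv := by rw [← hΨ]
      _ = Ψinv := by rw [h1, one_mul]
  have hkey_e : ∀ i k, (∑ j, σL (Ψinv i j) * (algebraMap E (∀ l, Ll l)) (Φ j k)) = Ψinv i k := by
    intro i k
    have := congrFun (congrFun hkey i) k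
    simpa [Matrix.mul_apply, Matrix.map_apply] using this
  -- smul computations in the tensor product
  have hsmulE : ∀ (e : E) (x : (∀ l, Ll l)) (y : M), x ⊗ₜ[E] (e • y) = ((algebraMap E (∀ l, Ll l)) e * x) ⊗ₜ[E] y := by
    intro e x y
    rw [TensorProduct.tmul_smul, TensorProduct.smul_tmul', Algebra.smul_def]
  have hsmulF : ∀ (g : F) (x : (∀ l, Ll l)) (y : M),
      g • (x ⊗ₜ[E] y) = (algebraMap F (∀ l, Ll l) g * x) ⊗ₜ[E] y := by
    intro g x y
    rw [TensorProduct.smul_tmul', Algebra.smul_def]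
  -- general computation of φT on sums
  have hφTsum : ∀ a : Fin r → (∀ l, Ll l), φT (∑ j, a j ⊗ₜ[E] b j) =
      ∑ k, (∑ j, σL (a j) * (algebraMap E (∀ l, Ll l)) (Φ j k)) ⊗ₜ[E] b k := by
    intro a
    rw [map_sum]
    calc ∑ j, φT (a j ⊗ₜ[E] b j)
        = ∑ j, ∑ k, (σL (a j) * (algebraMap E (∀ l, Ll l)) (Φ j k)) ⊗ₜ[E] b k := by
          refine Finset.sum_congr rfl fun j _ => ?_
          rw [hφT, hΦ, TensorProduct.tmul_sum]
          exact Finset.sum_congr rfl fun k _ => by rw [hsmulE, mul_comm]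
      _ = ∑ k, (∑ j, σL (a j) * (algebraMap E (∀ l, Ll l)) (Φ j k)) ⊗ₜ[E] b k := by
          rw [Finset.sum_comm]
          exact Finset.sum_congr rfl fun k _ => (TensorProduct.sum_tmul _ _ _).symm
  -- part 1
  have hpart1 : ∀ i, φT (∑ j, Ψinv i j ⊗ₜ[E] b j) = ∑ j, Ψinv i j ⊗ₜ[E] b j := by
    intro i
    rw [hφTsum]
    exact Finset.sum_congr rfl fun k _ => by rw [hkey_e]
  refine ⟨hpart1, ?_⟩
  -- the basis of (∀ l, Ll l) ⊗ M over (∀ l, Ll l)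
  let B : Module.Basis (Fin r) (∀ l, Ll l) ((∀ l, Ll l) ⊗[E] M) := Algebra.TensorProduct.basis (∀ l, Ll l) b
  have hB : ∀ (x : (∀ l, Ll l)) (j : Fin r), x • B j = x ⊗ₜ[E] b j := fun x j =>
    Algebra.TensorProduct.basis_repr_symm_apply' b x j
  have hcoef : ∀ (a a' : Fin r → (∀ l, Ll l)), (∑ j, a j ⊗ₜ[E] b j) = (∑ j, a' j ⊗ₜ[E] b j) →
      a = a' := by
    intro a a' h
    have h2 : (∑ j, a j • B j) = ∑ j, a' j • B j := by simp_rw [hB]; exact h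
    rw [← B.repr_sum_self a, ← B.repr_sum_self a', h2]
  -- membership in VM
  have hmem : ∀ i, (∑ j, Ψinv i j ⊗ₜ[E] b j) ∈ VM := fun i => (hVM _).mpr (hpart1 i)
  let c : Fin r → VM := fun i => ⟨∑ j, Ψinv i j ⊗ₜ[E] b j, hmem i⟩
  have hc : ∀ i, (c i : (∀ l, Ll l) ⊗[E] M) = ∑ j, Ψinv i j ⊗ₜ[E] b j := fun i => rfl
  -- linear independence
  have hind : LinearIndependent F c := by
    refine (@Fintype.linearIndependent_iff (Fin r) F ↥VM _ _ _ _ _).mpr fun g hg => ?_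
    have hg' : (∑ i, g i • (∑ j, Ψinv i j ⊗ₜ[E] b j)) = 0 := by
      have := congrArg (fun z : VM => (z : (∀ l, Ll l) ⊗[E] M)) hg
      simpa [AddSubmonoidClass.coe_finset_sum, SetLike.val_smul, hc] using this
    have hg'' : (∑ j, (∑ i, algebraMap F (∀ l, Ll l) (g i) * Ψinv i j) ⊗ₜ[E] b j) = 0 := by
      calc ∑ j, (∑ i, algebraMap F (∀ l, Ll l) (g i) * Ψinv i j) ⊗ₜ[E] b j
          = ∑ j, ∑ i, (algebraMap F (∀ l, Ll l) (g i) * Ψinv i j) ⊗ₜ[E] b j :=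
            Finset.sum_congr rfl fun j _ => TensorProduct.sum_tmul _ _ _
        _ = ∑ i, ∑ j, (algebraMap F (∀ l, Ll l) (g i) * Ψinv i j) ⊗ₜ[E] b j :=
            Finset.sum_comm
        _ = ∑ i, g i • (∑ j, Ψinv i j ⊗ₜ[E] b j) := by
            refine Finset.sum_congr rfl fun i _ => ?_
            rw [Finset.smul_sum]
            exact Finset.sum_congr rfl fun j _ => (hsmulF _ _ _).symm
        _ = 0 := hg'
    have hz : (fun j => ∑ i, algebraMap F (∀ l, Ll l) (g i) * Ψinv i j) = fun _ => 0 := by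
      apply hcoef
      rw [hg'']
      simp [TensorProduct.zero_tmul]
    intro k
    have h0 : algebraMap F (∀ l, Ll l) (g k) = 0 := by
      have := hcontract Ψinv Ψ hinv₂ (fun i => algebraMap F (∀ l, Ll l) (g i)) k
      rw [← this]
      simp_rw [congrFun hz]
      simp
    exact (algebraMap F (∀ l, Ll l)).injective (by rw [h0, map_zero])
  -- spanning
  have hspan : ⊤ ≤ Submodule.span F (Set.range c) := by
    rintro w -
    set a : Fin r → (∀ l, Ll l) := fun j => B.repr (w : (∀ l, Ll l) ⊗[E] M) j with ha
    have hw : (w : (∀ l, Ll l) ⊗[E] M) = ∑ j, a j ⊗ₜ[E] b j := by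
      conv_lhs => rw [← B.sum_repr (w : (∀ l, Ll l) ⊗[E] M)]
      exact Finset.sum_congr rfl fun j _ => hB _ j
    have hfixw : φT (w : (∀ l, Ll l) ⊗[E] M) = (w : (∀ l, Ll l) ⊗[E] M) := (hVM _).mp w.2
    have heq : (fun k => ∑ j, σL (a j) * (algebraMap E (∀ l, Ll l)) (Φ j k)) = a := by
      apply hcoef
      rw [← hφTsum, ← hw, hfixw, hw]
    -- the invariant vector f = aᵀΨ
    set f : Fin r → (∀ l, Ll l) := fun k => ∑ j, a j * Ψ j k with hf
    have hΨe : ∀ j k, σL (Ψ j k) = ∑ t, (algebraMap E (∀ l, Ll l)) (Φ j t) * Ψ t k := by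
      intro j k
      have := congrFun (congrFun hΨ j) k
      simpa [Matrix.mul_apply, Matrix.map_apply] using this
    have hσf : ∀ k, σL (f k) = f k := by
      intro k
      calc σL (f k) = ∑ j, σL (a j) * σL (Ψ j k) := by rw [hf]; simp [map_sum]
        _ = ∑ j, ∑ t, (σL (a j) * (algebraMap E (∀ l, Ll l)) (Φ j t)) * Ψ t k := by
            refine Finset.sum_congr rfl fun j _ => ?_
            rw [hΨe, Finset.mul_sum]
            exact Finset.sum_congr rfl fun t _ => (mul_assoc _ _ _).symm
        _ = ∑ t, (∑ j, σL (a j) * (algebraMap E (∀ l, Ll l)) (Φ j t)) * Ψ t k := by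
            rw [Finset.sum_comm]
            exact Finset.sum_congr rfl fun t _ => (Finset.sum_mul _ _ _).symm
        _ = f k := by simp_rw [congrFun heq]; rfl
    choose g hg using fun k => (hLfix (f k)).mp (hσf k)
    have hg' : ∀ k, algebraMap F (∀ l, Ll l) (g k) = f k := by
      intro k
      rw [IsScalarTower.algebraMap_apply F E (∀ l, Ll l)]
      exact hg k
    have haf : ∀ j, (∑ k, f k * Ψinv k j) = a j := fun j =>
      hcontract Ψ Ψinv hinv₁ a j
    have hwsum : w = ∑ k, g k • c k := by
      apply Subtype.ext
      calc (w : (∀ l, Ll l) ⊗[E] M) = ∑ j, a j ⊗ₜ[E] b j := hw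
        _ = ∑ j, (∑ k, f k * Ψinv k j) ⊗ₜ[E] b j := by simp_rw [haf]
        _ = ∑ k, ∑ j, (f k * Ψinv k j) ⊗ₜ[E] b j := by
            rw [Finset.sum_comm]
            exact Finset.sum_congr rfl fun j _ => TensorProduct.sum_tmul _ _ _
        _ = ∑ k, g k • (∑ j, Ψinv k j ⊗ₜ[E] b j) := by
            refine Finset.sum_congr rfl fun k _ => ?_
            rw [Finset.smul_sum]
            exact Finset.sum_congr rfl fun j _ => by rw [hsmulF, hg']
        _ = ((∑ k, g k • c k : VM) : (∀ l, Ll l) ⊗[E] M) := by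
            simp only [AddSubmonoidClass.coe_finset_sum, SetLike.val_smul, hc]
    rw [hwsum]
    exact Submodule.sum_mem _ fun k _ =>
      Submodule.smul_mem _ _ (Submodule.subset_span ⟨k, rfl⟩)
  obtain ⟨cb, hcb⟩ := basis_aux VM (fun i => ∑ j, Ψinv i j ⊗ₜ[E] b j) hmem hind hspan
  exact ⟨cb, hcb⟩
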